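/- Let X be an M-set, A ⊆ ω co-infinite, and x ∈ X supported on A. Then for every f ∈ M, the element f.x is supported on f(A). -/
import Mathlib

/-- The monoid of injective self-maps of ω (modelled as ℕ), under composition. -/
def M : Submonoid (Function.End ℕ) where
  carrier := {f | Function.Injective f}
  mul_mem' := fun hf hg => hf.comp hg
  one_mem' := fun _ _ h => h

/-- `x` is supported on `A` if it is fixed by every injection fixing `A` pointwise. -/
def Supported {X : Type*} [MulAction M X] (A : Set ℕ) (x : X) : Prop :=
  ∀ u : M, (∀ a ∈ A, u.1 a = a) → u • x = x

/-- Key lemma: if `g, h ∈ M` agree on `A` and their images of `Aᶜ` have infinite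
intersection, then `g • x = h • x` for any `x` supported on `A`. -/
lemma key {X : Type*} [MulAction M X] (A : Set ℕ) (x : X) (hx : Supported A x)
    (g h : M) (hgh : ∀ a ∈ A, g.1 a = h.1 a)
    (hS : ((g.1 '' Aᶜ) ∩ (h.1 '' Aᶜ)).Infinite) : g • x = h • x := by
  classical
  obtain ⟨c⟩ : Nonempty (ℕ ↪ ((g.1 '' Aᶜ) ∩ (h.1 '' Aᶜ) : Set ℕ)) := ⟨hS.natEmbedding⟩
  have hcg : ∀ n, ∃ a, a ∈ Aᶜ ∧ g.1 a = (c n : ℕ) := fun n => (c n).2.1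
  have hch : ∀ n, ∃ a, a ∈ Aᶜ ∧ h.1 a = (c n : ℕ) := fun n => (c n).2.2
  choose p hpA hpg using hcg
  choose q hqA hqh using hch
  have hpinj : Function.Injective p := fun m n hmn => by
    have : (c m : ℕ) = (c n : ℕ) := by rw [← hpg m, ← hpg n, hmn]
    exact c.injective (Subtype.ext this)
  have hqinj : Function.Injective q := fun m n hmn => by
    have : (c m : ℕ) = (c n : ℕ) := by rw [← hqh m, ← hqh n, hmn]
    exact c.injective (Subtype.ext this)
  let s : ℕ → ℕ := fun n => if n ∈ A then n else p n
  let t : ℕ → ℕ := fun n => if n ∈ A then n else q n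
  have hsinj : Function.Injective s := by
    intro m n hmn
    by_cases hm : m ∈ A <;> by_cases hn : n ∈ A <;>
      simp only [s, hm, hn, if_true, if_false, if_pos, if_neg, not_false_iff] at hmn
    · exact hmn
    · exact absurd (hmn ▸ hm) (hpA n)
    · exact absurd (hmn.symm ▸ hn) (hpA m)
    · exact hpinj hmn
  have htinj : Function.Injective t := by
    intro m n hmn
    by_cases hm : m ∈ A <;> by_cases hn : n ∈ A <;>
      simp only [t, hm, hn, if_true, if_false, if_pos, if_neg, not_false_iff] at hmn
    · exact hmn
    · exact absurd (hmn ▸ hm) (hqA n)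
    · exact absurd (hmn.symm ▸ hn) (hqA m)
    · exact hqinj hmn
  let sM : M := ⟨s, hsinj⟩
  let tM : M := ⟨t, htinj⟩
  have hsfix : ∀ a ∈ A, sM.1 a = a := fun a ha => if_pos ha
  have htfix : ∀ a ∈ A, tM.1 a = a := fun a ha => if_pos ha
  have hgt : g * sM = h * tM := by
    apply Subtype.ext
    funext n
    show g.1 (s n) = h.1 (t n)
    by_cases hn : n ∈ A
    · simp only [s, t, if_pos hn]; exact hgh n hn
    · simp only [s, t, if_neg hn]; rw [hpg n, hqh n]
  calc g • x = g • (sM • x) := by rw [hx sM hsfix]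
    _ = (g * sM) • x := (mul_smul g sM x).symm
    _ = (h * tM) • x := by rw [hgt]
    _ = h • (tM • x) := mul_smul h tM x
    _ = h • x := by rw [hx tM htfix]

/-- Combinatorial lemma: given infinite `C, D` and infinite `B`, there is an injection
of `B` into `C ∪ D` whose range meets both `C` and `D` infinitely. -/
lemma comb (B C D : Set ℕ) (hB : B.Infinite) (hC : C.Infinite) (hD : D.Infinite) :
    ∃ φ : B → ℕ, Function.Injective φ ∧ (∀ b, φ b ∈ C ∪ D) ∧
      (Set.range φ ∩ C).Infinite ∧ (Set.range φ ∩ D).Infinite := by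
  classical
  haveI := hB.to_subtype
  obtain ⟨e⟩ : Nonempty (B ≃ ℕ) := inferInstance
  by_cases hCD : (C ∩ D).Infinite
  · obtain ⟨c⟩ : Nonempty (ℕ ↪ (C ∩ D : Set ℕ)) := ⟨hCD.natEmbedding⟩
    refine ⟨fun b => (c (e b) : ℕ), ?_, ?_, ?_, ?_⟩
    · intro a b hab
      exact e.injective (c.injective (Subtype.ext hab))
    · intro b; exact Set.mem_union_left _ (c (e b)).2.1
    · refine Set.infinite_of_injective_forall_mem (f := fun n => (c n : ℕ)) ?_ ?_
      · intro a b hab; exact c.injective (Subtype.ext hab)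
      · intro n; exact ⟨⟨e.symm n, by simp⟩, (c n).2.1⟩
    · refine Set.infinite_of_injective_forall_mem (f := fun n => (c n : ℕ)) ?_ ?_
      · intro a b hab; exact c.injective (Subtype.ext hab)
      · intro n; exact ⟨⟨e.symm n, by simp⟩, (c n).2.2⟩
  · have hfin : (C ∩ D).Finite := Set.not_infinite.mp hCD
    have hC' : (C \ (C ∩ D)).Infinite := hC.diff hfin
    have hD' : (D \ (C ∩ D)).Infinite := hD.diff hfin
    obtain ⟨c1⟩ : Nonempty (ℕ ↪ (C \ (C ∩ D) : Set ℕ)) := ⟨hC'.natEmbedding⟩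
    obtain ⟨c2⟩ : Nonempty (ℕ ↪ (D \ (C ∩ D) : Set ℕ)) := ⟨hD'.natEmbedding⟩
    have hdisj : ∀ m n, (c1 m : ℕ) ≠ (c2 n : ℕ) := by
      intro m n hmn
      have h1 := (c1 m).2
      have h2 := (c2 n).2
      exact h1.2 ⟨h1.1, by rw [hmn]; exact h2.1⟩
    refine ⟨fun b => if Even (e b) then (c1 (e b) : ℕ) else (c2 (e b) : ℕ), ?_, ?_, ?_, ?_⟩
    · intro a b hab
      by_cases ha : Even (e a) <;> by_cases hb : Even (e b) <;>
        simp only [ha, hb, if_true, if_false, if_pos, if_neg, not_false_iff] at hab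
      · exact e.injective (c1.injective (Subtype.ext hab))
      · exact absurd hab (hdisj _ _)
      · exact absurd hab.symm (hdisj _ _)
      · exact e.injective (c2.injective (Subtype.ext hab))
    · intro b
      by_cases hb : Even (e b)
      · simp only [if_pos hb]; exact Set.mem_union_left _ (c1 (e b)).2.1
      · simp only [if_neg hb]; exact Set.mem_union_right _ (c2 (e b)).2.1
    · refine Set.infinite_of_injective_forall_mem (f := fun n => (c1 (2 * n) : ℕ)) ?_ ?_
      · intro a b hab
        have := c1.injective (Subtype.ext hab)
        omega
      · intro n
        refine ⟨⟨e.symm (2 * n), ?_⟩, (c1 (2 * n)).2.1⟩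
        simp [even_two_mul]
    · refine Set.infinite_of_injective_forall_mem (f := fun n => (c2 (2 * n + 1) : ℕ)) ?_ ?_
      · intro a b hab
        have := c2.injective (Subtype.ext hab)
        omega
      · intro n
        refine ⟨⟨e.symm (2 * n + 1), ?_⟩, (c2 (2 * n + 1)).2.1⟩
        simp [parity_simps]

theorem stmt_1 {X : Type*} [MulAction M X] (A : Set ℕ) (hA : (Aᶜ : Set ℕ).Infinite)
    (x : X) (hx : Supported A x) (f : M) :
    Supported (f.1 '' A) (f • x) := by
  classical
  intro u hu
  -- images of Aᶜ under f and u∘f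
  have hfC : ((f.1 '' Aᶜ : Set ℕ)).Infinite := hA.image (f.2.injOn)
  have hufC : (((u * f).1 '' Aᶜ : Set ℕ)).Infinite := hA.image ((u * f).2.injOn)
  obtain ⟨φ, hφinj, hφmem, hφC, hφD⟩ := comb Aᶜ (f.1 '' Aᶜ) ((u * f).1 '' Aᶜ) hA hfC hufC
  -- the mediating injection m
  let m : ℕ → ℕ := fun n => if hn : n ∈ A then f.1 n else φ ⟨n, hn⟩
  -- range of φ avoids f '' A
  have hφavoid : ∀ (b : (Aᶜ : Set ℕ)) (a : ℕ), a ∈ A → φ b ≠ f.1 a := by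
    intro b a ha hba
    rcases hφmem b with hmem | hmem
    · obtain ⟨a', ha', hfa'⟩ := hmem
      refine ha' ?_
      rw [f.2 (hfa'.trans hba)]
      exact ha
    · obtain ⟨a', ha', hfa'⟩ := hmem
      have h2 : u.1 (f.1 a') = f.1 a := hfa'.trans hba
      have h3 : u.1 (f.1 a) = f.1 a := hu (f.1 a) ⟨a, ha, rfl⟩
      have h4 : f.1 a' = f.1 a := u.2 (h2.trans h3.symm)
      refine ha' ?_
      rw [f.2 h4]
      exact ha
  have hminj : Function.Injective m := by
    intro a b hab
    by_cases ha : a ∈ A <;> by_cases hb : b ∈ A <;>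
      simp only [m, ha, hb, dif_pos, dif_neg, not_false_iff] at hab
    · exact f.2 hab
    · exact absurd hab.symm (hφavoid ⟨b, hb⟩ a ha)
    · exact absurd hab (hφavoid ⟨a, ha⟩ b hb)
    · exact congrArg Subtype.val (hφinj hab)
  let mM : M := ⟨m, hminj⟩
  have hmA : ∀ a ∈ A, mM.1 a = f.1 a := fun a ha => dif_pos ha
  -- m '' Aᶜ = range φ
  have hmim : mM.1 '' Aᶜ = Set.range φ := by
    ext y
    constructor
    · rintro ⟨a, ha, rfl⟩
      refine ⟨⟨a, ha⟩, ?_⟩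
      show φ ⟨a, ha⟩ = m a
      simp only [m]
      rw [dif_neg ha]
    · rintro ⟨⟨a, ha⟩, rfl⟩
      refine ⟨a, ha, ?_⟩
      show m a = φ ⟨a, ha⟩
      simp only [m]
      rw [dif_neg ha]
  -- m • x = f • x
  have h1 : mM • x = f • x := by
    apply key A x hx mM f hmA
    rw [hmim]
    exact hφC.mono (Set.inter_subset_inter_left _ (le_refl _))
  -- m • x = (u * f) • x
  have h2 : mM • x = (u * f) • x := by
    apply key A x hx mM (u * f)
    · intro a ha
      rw [hmA a ha]
      exact (hu (f.1 a) ⟨a, ha, rfl⟩).symm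
    · rw [hmim]
      exact hφD.mono (Set.inter_subset_inter_left _ (le_refl _))
  calc u • (f • x) = (u * f) • x := (mul_smul u f x).symm
    _ = mM • x := h2.symm
    _ = f • x := h1
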